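/- For every l ∈ ℕ and every x ≥ 0, x^l = ∑_{k=0}^{l} (−1)^k · C(l,k) · l! · L_k(x), where L_k is the k-th Laguerre polynomial. -/

import Mathlib

/-- The `k`-th Laguerre polynomial: `L_k(x) = ∑_{l=0}^k ((-1)^l / l!) C(k,l) x^l`. -/
noncomputable def laguerreL (k : ℕ) (x : ℝ) : ℝ :=
  ∑ l ∈ Finset.range (k + 1), ((-1 : ℝ) ^ l / (l.factorial : ℝ)) * (k.choose l : ℝ) * x ^ l

lemma key_sum (l j : ℕ) (hj : j ≤ l) :
    ∑ k ∈ Finset.range (l + 1), (-1 : ℝ) ^ k * (l.choose k : ℝ) * (k.choose j : ℝ)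
      = if j = l then (-1 : ℝ) ^ l else 0 := by
  have h1 : ∑ k ∈ Finset.range (l + 1), (-1 : ℝ) ^ k * (l.choose k : ℝ) * (k.choose j : ℝ)
      = ∑ k ∈ Finset.Ico j (l + 1), (-1 : ℝ) ^ k * (l.choose k : ℝ) * (k.choose j : ℝ) := by
    rw [Finset.range_eq_Ico, ← Finset.sum_Ico_consecutive _ (Nat.zero_le j) (by omega)]
    have : ∑ k ∈ Finset.Ico 0 j, (-1 : ℝ) ^ k * (l.choose k : ℝ) * (k.choose j : ℝ) = 0 := by
      apply Finset.sum_eq_zero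
      intro k hk
      simp only [Finset.mem_Ico] at hk
      rw [Nat.choose_eq_zero_of_lt hk.2]
      simp
    rw [this, zero_add]
  rw [h1, Finset.sum_Ico_eq_sum_range]
  have h2 : ∀ m ∈ Finset.range (l + 1 - j),
      (-1 : ℝ) ^ (j + m) * (l.choose (j + m) : ℝ) * ((j + m).choose j : ℝ)
      = ((-1 : ℝ) ^ j * (l.choose j : ℝ)) * ((-1 : ℝ) ^ m * ((l - j).choose m : ℝ)) := by
    intro m hm
    simp only [Finset.mem_range] at hm
    have hkn : j + m ≤ l := by omega
    have hc := Nat.choose_mul (n := l) (Nat.le_add_right j m)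
    have hc' : (l.choose (j + m) : ℝ) * ((j + m).choose j : ℝ)
        = (l.choose j : ℝ) * ((l - j).choose (j + m - j) : ℝ) := by
      exact_mod_cast congrArg (Nat.cast (R := ℝ)) hc
    rw [pow_add]
    rw [Nat.add_sub_cancel_left] at hc'
    linear_combination ((-1:ℝ)^j * (-1)^m) * hc'
  rw [Finset.sum_congr rfl h2, ← Finset.mul_sum]
  have h3 : l + 1 - j = (l - j) + 1 := by omega
  rw [h3]
  have h4 : ∑ m ∈ Finset.range (l - j + 1), (-1 : ℝ) ^ m * ((l - j).choose m : ℝ)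
      = if l - j = 0 then 1 else 0 := by
    have := Int.alternating_sum_range_choose (n := l - j)
    exact_mod_cast congrArg (Int.cast (R := ℝ)) this
  rw [h4]
  by_cases h : j = l
  · subst h; simp
  · have : l - j ≠ 0 := by omega
    simp [h, this]

/-- for every `l` and every `x ≥ 0`,
`x^l = ∑_{k=0}^{l} (−1)^k C(l,k) l! L_k(x)`. -/
theorem monomial_eq_sum_laguerre (l : ℕ) (x : ℝ) (hx : 0 ≤ x) :
    x ^ l = ∑ k ∈ Finset.range (l + 1),
      (-1 : ℝ) ^ k * (l.choose k : ℝ) * (l.factorial : ℝ) * laguerreL k x := by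
  have step : ∀ k ∈ Finset.range (l + 1),
      (-1 : ℝ) ^ k * (l.choose k : ℝ) * (l.factorial : ℝ) * laguerreL k x
      = ∑ j ∈ Finset.range (l + 1), (-1 : ℝ) ^ k * (l.choose k : ℝ) * (l.factorial : ℝ) *
          (((-1 : ℝ) ^ j / (j.factorial : ℝ)) * (k.choose j : ℝ) * x ^ j) := by
    intro k hk
    simp only [Finset.mem_range] at hk
    rw [laguerreL, Finset.mul_sum]
    apply Finset.sum_subset
    · exact Finset.range_subset_range.mpr (by omega)
    · intro j _ hj
      simp only [Finset.mem_range, not_lt] at hj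
      rw [Nat.choose_eq_zero_of_lt (show k < j by omega)]
      ring
  rw [Finset.sum_congr rfl step, Finset.sum_comm]
  have inner : ∀ j ∈ Finset.range (l + 1),
      ∑ k ∈ Finset.range (l + 1), (-1 : ℝ) ^ k * (l.choose k : ℝ) * (l.factorial : ℝ) *
          (((-1 : ℝ) ^ j / (j.factorial : ℝ)) * (k.choose j : ℝ) * x ^ j)
      = ((-1 : ℝ) ^ j * (l.factorial : ℝ) / (j.factorial : ℝ) * x ^ j) *
          (if j = l then (-1 : ℝ) ^ l else 0) := by
    intro j hj
    simp only [Finset.mem_range] at hj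
    rw [← key_sum l j (by omega), Finset.mul_sum]
    apply Finset.sum_congr rfl
    intro k _
    ring
  rw [Finset.sum_congr rfl inner]
  simp only [mul_ite, mul_zero]
  rw [Finset.sum_ite_eq' (Finset.range (l + 1)) l]
  simp only [Finset.mem_range, lt_add_iff_pos_right, Nat.lt_one_iff, if_pos rfl, if_true]
  have hfac : (l.factorial : ℝ) ≠ 0 := Nat.cast_ne_zero.mpr l.factorial_ne_zero
  field_simp
  rw [← pow_mul, mul_comm l 2, pow_mul]
  norm_num
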